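/- Let n ≥ 2 and let π⁺, π⁻ be subsets of the simple roots π of sl_n with π⁺ ∪ π⁻ = π. Let a, b, a', b' ∈ [1,n] be such that ε_a − ε_b ∈ (−R_*) ∩ Δ⁺ and ε_{a'} − ε_{b'} ∈ (−R_*) ∩ Δ⁻. Then it cannot happen that both ε_a − ε_{b'} ∈ M and ε_{a'} − ε_b ∈ M. (The key case of Lemma 9.3, in which each straightened edge equals its original edge and so has value in −R_*.) -/

import Mathlib

open Pointwise

noncomputable def eps (n : ℕ) (i : Fin n) : Fin n → ℝ := Pi.single i 1

/-- The roots of `sl_n`: `ε_i - ε_j` for `i ≠ j`. -/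
def Delta (n : ℕ) : Set (Fin n → ℝ) :=
  {v | ∃ i j : Fin n, i ≠ j ∧ v = eps n i - eps n j}

/-- The positive roots: `ε_i - ε_j` for `i < j`. -/
def DeltaPos (n : ℕ) : Set (Fin n → ℝ) :=
  {v | ∃ i j : Fin n, i < j ∧ v = eps n i - eps n j}

/-- The negative roots. -/
def DeltaNeg (n : ℕ) : Set (Fin n → ℝ) := -DeltaPos n

/-- The simple roots `α_i = ε_i - ε_{i+1}`. -/
def simpleRoots (n : ℕ) : Set (Fin n → ℝ) :=
  {v | ∃ i j : Fin n, (j : ℕ) = (i : ℕ) + 1 ∧ v = eps n i - eps n j}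

/-- The set of ℕ-linear combinations of elements of `S`. -/
def Nspan {n : ℕ} (S : Set (Fin n → ℝ)) : Set (Fin n → ℝ) :=
  (AddSubmonoid.closure S : AddSubmonoid (Fin n → ℝ))

/-- `R = (ℕπ⁺ ∪ (−ℕπ⁻)) ∩ Δ`. -/
def Rset (n : ℕ) (Pp Pm : Set (Fin n → ℝ)) : Set (Fin n → ℝ) :=
  (Nspan Pp ∪ -Nspan Pm) ∩ Delta n

/-- `K = Δ \ R`. -/
def Kset (n : ℕ) (Pp Pm : Set (Fin n → ℝ)) : Set (Fin n → ℝ) :=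
  Delta n \ Rset n Pp Pm

/-- `M = R ∩ (−R)`. -/
def Mset (n : ℕ) (Pp Pm : Set (Fin n → ℝ)) : Set (Fin n → ℝ) :=
  Rset n Pp Pm ∩ -Rset n Pp Pm

/-- `R_* = (−R) \ M`. -/
def RstarSet (n : ℕ) (Pp Pm : Set (Fin n → ℝ)) : Set (Fin n → ℝ) :=
  -Rset n Pp Pm \ Mset n Pp Pm

-- auxiliary
noncomputable def Fm (n m : ℕ) (v : Fin n → ℝ) : ℝ := ∑ x : Fin n, if (x:ℕ) < m then v x else 0

def SP (n : ℕ) (S : Set (Fin n → ℝ)) (t : ℕ) : Prop :=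
  ∃ i j : Fin n, (i:ℕ) = t ∧ (j:ℕ) = t + 1 ∧ eps n i - eps n j ∈ S

lemma Fm_eps (n m : ℕ) (i : Fin n) : Fm n m (eps n i) = if (i:ℕ) < m then 1 else 0 := by
  rw [Fm, Finset.sum_eq_single i]
  · simp [eps]
  · intro b _ hb; simp [eps, Pi.single_apply, hb]
  · simp

lemma Fm_sub (n m : ℕ) (v w : Fin n → ℝ) : Fm n m (v - w) = Fm n m v - Fm n m w := by
  simp only [Fm, Pi.sub_apply, ← Finset.sum_sub_distrib]
  congr 1; ext x; split <;> simp

lemma Fm_add (n m : ℕ) (v w : Fin n → ℝ) : Fm n m (v + w) = Fm n m v + Fm n m w := by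
  simp only [Fm, Pi.add_apply, ← Finset.sum_add_distrib]
  congr 1; ext x; split <;> simp

lemma Fm_zero (n m : ℕ) : Fm n m 0 = 0 := by simp [Fm]

lemma Fm_root (n m : ℕ) (i j : Fin n) :
    Fm n m (eps n i - eps n j) = (if (i:ℕ) < m then (1:ℝ) else 0) - (if (j:ℕ) < m then 1 else 0) := by
  rw [Fm_sub, Fm_eps, Fm_eps]

lemma span_Fm {n : ℕ} {S : Set (Fin n → ℝ)} (hS : S ⊆ simpleRoots n) {v : Fin n → ℝ}
    (hv : v ∈ Nspan S) (m : ℕ) :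
    0 ≤ Fm n m v ∧ (0 < Fm n m v → ∃ t, t + 1 = m ∧ SP n S t) := by
  induction hv using AddSubmonoid.closure_induction with
  | mem x hx =>
      obtain ⟨i, j, hji, rfl⟩ := hS hx
      rw [Fm_root]
      by_cases h1 : (i:ℕ) < m <;> by_cases h2 : (j:ℕ) < m
      · simp [h1, h2]
      · simp only [h1, h2, if_true, if_false]
        refine ⟨by norm_num, fun _ => ⟨(i:ℕ), ?_, i, j, rfl, hji, hx⟩⟩
        omega
      · omega
      · simp [h1, h2]
  | zero => simp [Fm_zero]
  | add x y hx hy ihx ihy =>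
      rw [Fm_add]
      constructor
      · linarith [ihx.1, ihy.1]
      · intro h
        rcases lt_or_ge 0 (Fm n m x) with h' | h'
        · exact ihx.2 h'
        · exact ihy.2 (by linarith [ihx.1])

lemma span_of_interval {n : ℕ} {S : Set (Fin n → ℝ)} :
    ∀ (k : ℕ) (i j : Fin n), (j:ℕ) - (i:ℕ) = k → (i:ℕ) ≤ (j:ℕ) →
    (∀ t, (i:ℕ) ≤ t → t < (j:ℕ) → SP n S t) → eps n i - eps n j ∈ Nspan S := by
  intro k
  induction k with
  | zero =>
      intro i j hk hle _
      have : i = j := Fin.ext (by omega)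
      subst this
      simp only [sub_self]
      exact AddSubmonoid.zero_mem _
  | succ k ih =>
      intro i j hk hle hall
      have hij : (i:ℕ) < (j:ℕ) := by omega
      obtain ⟨i', j', hi', hj', hmem0⟩ := hall (i:ℕ) le_rfl hij
      have hmem : eps n i - eps n j' ∈ S := by
        rw [show i = i' from Fin.ext hi'.symm]; exact hmem0
      have hj'j : (j':ℕ) ≤ (j:ℕ) := by omega
      have hstep : eps n j' - eps n j ∈ Nspan S := by
        refine ih j' j (by omega) hj'j (fun t ht1 ht2 => hall t (by omega) ht2)
      have : eps n i - eps n j = (eps n i - eps n j') + (eps n j' - eps n j) := by ring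
      rw [this]
      exact AddSubmonoid.add_mem _ (AddSubmonoid.subset_closure hmem) hstep

lemma pos_root_span_iff {n : ℕ} {S : Set (Fin n → ℝ)} (hS : S ⊆ simpleRoots n)
    (i j : Fin n) (hij : (i:ℕ) < (j:ℕ)) :
    eps n i - eps n j ∈ Nspan S ↔ ∀ t, (i:ℕ) ≤ t → t < (j:ℕ) → SP n S t := by
  constructor
  · intro h t ht1 ht2
    have := (span_Fm hS h (t+1)).2
    rw [Fm_root] at this
    have h1 : (i:ℕ) < t + 1 := by omega
    have h2 : ¬ ((j:ℕ) < t + 1) := by omega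
    simp only [h1, h2, if_true, if_false] at this
    obtain ⟨t', ht', hsp⟩ := this (by norm_num)
    have : t' = t := by omega
    exact this ▸ hsp
  · exact fun h => span_of_interval _ i j rfl (le_of_lt hij) h

lemma pos_root_not_neg_span {n : ℕ} {S : Set (Fin n → ℝ)} (hS : S ⊆ simpleRoots n)
    (i j : Fin n) (hij : (i:ℕ) < (j:ℕ)) :
    eps n j - eps n i ∉ Nspan S := by
  intro h
  have := (span_Fm hS h ((i:ℕ)+1)).1
  rw [Fm_root] at this
  have h1 : (i:ℕ) < (i:ℕ) + 1 := by omega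
  have h2 : ¬ ((j:ℕ) < (i:ℕ) + 1) := by omega
  simp only [h1, h2, if_true, if_false] at this
  linarith

lemma pos_in_R_iff {n : ℕ} {Pp Pm : Set (Fin n → ℝ)} (hPp : Pp ⊆ simpleRoots n)
    (hPm : Pm ⊆ simpleRoots n) (i j : Fin n) (hij : (i:ℕ) < (j:ℕ)) :
    eps n i - eps n j ∈ Rset n Pp Pm ↔ ∀ t, (i:ℕ) ≤ t → t < (j:ℕ) → SP n Pp t := by
  constructor
  · rintro ⟨h1, -⟩
    rcases h1 with h | h
    · exact (pos_root_span_iff hPp i j hij).1 h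
    · exfalso
      rw [Set.mem_neg, neg_sub] at h
      exact pos_root_not_neg_span hPm i j hij h
  · intro h
    refine ⟨Or.inl ((pos_root_span_iff hPp i j hij).2 h), i, j, ?_, rfl⟩
    intro he; rw [he] at hij; omega

lemma neg_in_R_iff {n : ℕ} {Pp Pm : Set (Fin n → ℝ)} (hPp : Pp ⊆ simpleRoots n)
    (hPm : Pm ⊆ simpleRoots n) (i j : Fin n) (hij : (i:ℕ) < (j:ℕ)) :
    eps n j - eps n i ∈ Rset n Pp Pm ↔ ∀ t, (i:ℕ) ≤ t → t < (j:ℕ) → SP n Pm t := by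
  constructor
  · rintro ⟨h1, -⟩
    rcases h1 with h | h
    · exact absurd h (pos_root_not_neg_span hPp i j hij)
    · rw [Set.mem_neg, neg_sub] at h
      exact (pos_root_span_iff hPm i j hij).1 h
  · intro h
    refine ⟨Or.inr ?_, j, i, ?_, rfl⟩
    · rw [Set.mem_neg, neg_sub]
      exact (pos_root_span_iff hPm i j hij).2 h
    · intro he; rw [he] at hij; omega

lemma eps_eq {n : ℕ} {i j a b : Fin n} (hij : i ≠ j)
    (h : eps n i - eps n j = eps n a - eps n b) : i = a ∧ j = b := by
  have hi := congrFun h i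
  have hj := congrFun h j
  simp only [eps, Pi.sub_apply, Pi.single_apply] at hi hj
  constructor
  · by_contra hia
    split_ifs at hi <;>
      first
      | exact hia (by assumption)
      | exact hij (by assumption)
      | exact absurd rfl (by assumption)
      | norm_num at hi
  · by_contra hjb
    split_ifs at hj <;>
      first
      | exact hjb (by assumption)
      | exact hij (Eq.symm (by assumption))
      | exact absurd rfl (by assumption)
      | norm_num at hj

lemma M_symm {n : ℕ} {Pp Pm : Set (Fin n → ℝ)} {v : Fin n → ℝ}
    (h : v ∈ Mset n Pp Pm) : -v ∈ Mset n Pp Pm := by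
  obtain ⟨h1, h2⟩ := h
  exact ⟨Set.mem_neg.mp h2, Set.mem_neg.mpr (by rwa [neg_neg])⟩

lemma M_interval {n : ℕ} {Pp Pm : Set (Fin n → ℝ)} (hPp : Pp ⊆ simpleRoots n)
    (hPm : Pm ⊆ simpleRoots n) (i j : Fin n) (hij : (i:ℕ) < (j:ℕ))
    (h : eps n i - eps n j ∈ Mset n Pp Pm) :
    ∀ t, (i:ℕ) ≤ t → t < (j:ℕ) → SP n Pp t ∧ SP n Pm t := by
  obtain ⟨h1, h2⟩ := h
  rw [Set.mem_neg, neg_sub] at h2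
  intro t ht1 ht2
  exact ⟨(pos_in_R_iff hPp hPm i j hij).1 h1 t ht1 ht2,
    (neg_in_R_iff hPp hPm i j hij).1 h2 t ht1 ht2⟩

/-- The key case of Lemma 9.3: if `ε_a − ε_b ∈ (−R_*) ∩ Δ⁺` and `ε_{a'} − ε_{b'} ∈ (−R_*) ∩ Δ⁻`,
then it cannot happen that both `ε_a − ε_{b'} ∈ M` and `ε_{a'} − ε_b ∈ M`. -/
theorem statement_16 (n : ℕ) (hn : 2 ≤ n) (Pp Pm : Set (Fin n → ℝ))
    (hPp : Pp ⊆ simpleRoots n) (hPm : Pm ⊆ simpleRoots n)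
    (hU : Pp ∪ Pm = simpleRoots n)
    (a b a' b' : Fin n)
    (h1 : eps n a - eps n b ∈ (-RstarSet n Pp Pm) ∩ DeltaPos n)
    (h2 : eps n a' - eps n b' ∈ (-RstarSet n Pp Pm) ∩ DeltaNeg n) :
    ¬ (eps n a - eps n b' ∈ Mset n Pp Pm ∧ eps n a' - eps n b ∈ Mset n Pp Pm) := by
  unfold RstarSet at h1 h2
  rintro ⟨hM1, hM2⟩
  -- a < b
  obtain ⟨hR1, hP1⟩ := h1
  obtain ⟨i, j, hij, heq⟩ := hP1
  have hab : (a:ℕ) < (b:ℕ) := by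
    obtain ⟨h5, h6⟩ := eps_eq (a := a) (b := b) (Fin.ne_of_lt hij) heq.symm
    rw [h5, h6] at hij
    exact Fin.lt_def.mp hij
  clear hij heq
  -- b' < a'
  obtain ⟨hR2, hP2⟩ := h2
  rw [DeltaNeg, Set.mem_neg, neg_sub] at hP2
  obtain ⟨i, j, hij2, heq2⟩ := hP2
  have hba : (b':ℕ) < (a':ℕ) := by
    obtain ⟨h5, h6⟩ := eps_eq (a := b') (b := a') (Fin.ne_of_lt hij2) heq2.symm
    rw [h5, h6] at hij2
    exact Fin.lt_def.mp hij2
  clear hij2 heq2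
  -- unpack h1: eps a - eps b ∈ R, and eps b - eps a ∉ R
  rw [Set.mem_neg, neg_sub, Set.mem_diff, Set.mem_neg, neg_sub] at hR1
  obtain ⟨hR1a, hR1b⟩ := hR1
  have hPpab : ∀ t, (a:ℕ) ≤ t → t < (b:ℕ) → SP n Pp t :=
    (pos_in_R_iff hPp hPm a b hab).1 hR1a
  have hk : ∃ k, (a:ℕ) ≤ k ∧ k < (b:ℕ) ∧ ¬ SP n Pm k := by
    by_contra hcon
    push_neg at hcon
    exact hR1b ⟨(neg_in_R_iff hPp hPm a b hab).2 (fun t ht1 ht2 => hcon t ht1 ht2),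
      Set.mem_neg.mpr (by rw [neg_sub]; exact hR1a)⟩
  -- unpack h2: eps a' - eps b' ∈ R (negative root), eps b' - eps a' ∉ R
  rw [Set.mem_neg, neg_sub, Set.mem_diff, Set.mem_neg, neg_sub] at hR2
  obtain ⟨hR2a, hR2b⟩ := hR2
  have hPmba : ∀ t, (b':ℕ) ≤ t → t < (a':ℕ) → SP n Pm t :=
    (neg_in_R_iff hPp hPm b' a' hba).1 hR2a
  have hl : ∃ l, (b':ℕ) ≤ l ∧ l < (a':ℕ) ∧ ¬ SP n Pp l := by
    by_contra hcon
    push_neg at hcon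
    exact hR2b ⟨(pos_in_R_iff hPp hPm b' a' hba).2 (fun t ht1 ht2 => hcon t ht1 ht2),
      Set.mem_neg.mpr (by rw [neg_sub]; exact hR2a)⟩
  obtain ⟨k, hk1, hk2, hk3⟩ := hk
  obtain ⟨l, hl1, hl2, hl3⟩ := hl
  -- a ≠ b' and a' ≠ b from M ⊆ Delta
  have hab' : a ≠ b' := by
    obtain ⟨⟨-, i, j, hij3, heq3⟩, -⟩ := hM1
    obtain ⟨h5, h6⟩ := eps_eq hij3 heq3.symm
    rw [← h5, ← h6]; exact hij3
  have ha'b : a' ≠ b := by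
    obtain ⟨⟨-, i, j, hij3, heq3⟩, -⟩ := hM2
    obtain ⟨h5, h6⟩ := eps_eq hij3 heq3.symm
    rw [← h5, ← h6]; exact hij3
  -- M intervals
  have hM1' : ∀ t, min (a:ℕ) (b':ℕ) ≤ t → t < max (a:ℕ) (b':ℕ) → SP n Pp t ∧ SP n Pm t := by
    rcases lt_or_gt_of_ne (fun h => hab' (Fin.ext h) : (a:ℕ) ≠ (b':ℕ)) with h | h
    · intro t ht1 ht2
      exact M_interval hPp hPm a b' h hM1 t (by omega) (by omega)
    · intro t ht1 ht2
      have := M_symm hM1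
      rw [neg_sub] at this
      exact M_interval hPp hPm b' a h this t (by omega) (by omega)
  have hM2' : ∀ t, min (a':ℕ) (b:ℕ) ≤ t → t < max (a':ℕ) (b:ℕ) → SP n Pp t ∧ SP n Pm t := by
    rcases lt_or_gt_of_ne (fun h => ha'b (Fin.ext h) : (a':ℕ) ≠ (b:ℕ)) with h | h
    · intro t ht1 ht2
      exact M_interval hPp hPm a' b h hM2 t (by omega) (by omega)
    · intro t ht1 ht2
      have := M_symm hM2
      rw [neg_sub] at this
      exact M_interval hPp hPm b a' h this t (by omega) (by omega)
  -- combinatorial contradiction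
  rcases lt_or_gt_of_ne (fun h => hab' (Fin.ext h) : (a:ℕ) ≠ (b':ℕ)) with hcase | hcase
  · -- a < b'
    have hkb' : (b':ℕ) ≤ k := by
      by_contra h
      exact hk3 (hM1' k (by omega) (by omega)).2
    have hka' : (a':ℕ) ≤ k := by
      by_contra h
      exact hk3 (hPmba k hkb' (by omega))
    exact hk3 (hM2' k (by omega) (by omega)).2
  · -- b' < a
    have hla : (a:ℕ) ≤ l := by
      by_contra h
      exact hl3 (hM1' l (by omega) (by omega)).1
    have hlb : (b:ℕ) ≤ l := by
      by_contra h
      exact hl3 (hPpab l hla (by omega))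
    exact hl3 (hM2' l (by omega) (by omega)).1
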